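/- arXiv:math/0404051 — 2 statements merged into one kernel-verified Lean document; each statement's English description precedes it below -/
import Mathlib

section
/- Let k be a commutative ring and V a free k-module of finite rank r. Suppose φ is a k-linear endomorphism of ⋀V homogeneous of degree −n with n ≥ 0, and δ is a k-linear superderivation of ⋀V homogeneous of degree j with −n + j ≤ 0. Then Tr_Λ([δ,φ]_s) = [δ, Tr_Λ(φ)]_s; precisely, i(Tr_Λ([δ,φ]_s)) = [δ, i(Tr_Λ(φ))]_s as k-linear endomorphisms of ⋀V. -/
open ExteriorAlgebra

variable (k : Type*) [CommRing k] (V : Type*) [AddCommGroup V] [Module k V]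

-- the grading involution ε : +1 on even part, −1 on odd part
noncomputable def eps : ExteriorAlgebra k V →ₐ[k] ExteriorAlgebra k V :=
  ExteriorAlgebra.lift k ⟨-(ExteriorAlgebra.ι k (M := V)), fun m => by
    simp [ExteriorAlgebra.ι_sq_zero]⟩

-- the supertrace
noncomputable def strs (φ : Module.End k (ExteriorAlgebra k V)) : k :=
  LinearMap.trace k _ ((eps k V).toLinearMap ∘ₗ φ)

-- projection onto the degree-n graded component
noncomputable def pr (n : ℕ) : ExteriorAlgebra k V →ₗ[k] ⋀[k]^n V :=
  (DirectSum.component k ℕ (fun i => (⋀[k]^i V : Submodule k (ExteriorAlgebra k V))) n) ∘ₗ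
    (DirectSum.decomposeLinearEquiv (fun i : ℕ => (⋀[k]^i V : Submodule k (ExteriorAlgebra k V)))).toLinearMap

noncomputable def prEnd (n : ℕ) : Module.End k (ExteriorAlgebra k V) :=
  (Submodule.subtype _) ∘ₗ pr k V n

-- the degree-d homogeneous component of an endomorphism
noncomputable def cpt (d : ℤ) (φ : Module.End k (ExteriorAlgebra k V)) :
    Module.End k (ExteriorAlgebra k V) :=
  ∑ m ∈ Finset.range (Module.finrank k V + 1),
    if 0 ≤ (m : ℤ) + d then prEnd k V ((m : ℤ) + d).toNat ∘ₗ φ ∘ₗ prEnd k V m else 0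

-- generalized supertrace of a degree-(−n) homogeneous endomorphism
noncomputable def TrHom (n : ℕ) (φ : Module.End k (ExteriorAlgebra k V)) :
    Module.Dual k (⋀[k]^n V) where
  toFun η := (-1 : k) ^ n * strs k V ((LinearMap.mulLeft k (η : ExteriorAlgebra k V)) ∘ₗ φ)
  map_add' x y := by
    have h : ∀ a b : ExteriorAlgebra k V, LinearMap.mulLeft k (a + b) =
        LinearMap.mulLeft k a + LinearMap.mulLeft k b := fun a b => by
      ext z; simp [add_mul]
    simp [h, strs, LinearMap.comp_add, LinearMap.add_comp, mul_add]
  map_smul' c x := by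
    have h : ∀ (c : k) (a : ExteriorAlgebra k V), LinearMap.mulLeft k (c • a) =
        c • LinearMap.mulLeft k a := fun c a => by
      ext z; simp [smul_mul_assoc]
    simp [h, strs, LinearMap.comp_smul, LinearMap.smul_comp]
    ring

-- generalized supertrace of an arbitrary endomorphism, at level n
noncomputable def TrGen (n : ℕ) (φ : Module.End k (ExteriorAlgebra k V)) :
    Module.Dual k (⋀[k]^n V) :=
  TrHom k V n (cpt k V (-(n : ℤ)) φ)

-- the embedding i : ⋀ V^∨ → End(⋀ V)
noncomputable def iEmb (n : ℕ) (α : Module.Dual k (⋀[k]^n V)) :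
    Module.End k (ExteriorAlgebra k V) :=
  (Algebra.linearMap k (ExteriorAlgebra k V)) ∘ₗ α ∘ₗ pr k V n

-- i ∘ Tr_Λ as a single endomorphism, and its even/odd parts
noncomputable def iTr (φ : Module.End k (ExteriorAlgebra k V)) :
    Module.End k (ExteriorAlgebra k V) :=
  ∑ n ∈ Finset.range (Module.finrank k V + 1), iEmb k V n (TrGen k V n φ)

noncomputable def iTrEven (φ : Module.End k (ExteriorAlgebra k V)) :
    Module.End k (ExteriorAlgebra k V) :=
  ∑ n ∈ Finset.range (Module.finrank k V + 1),
    if Even n then iEmb k V n (TrGen k V n φ) else 0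

noncomputable def iTrOdd (φ : Module.End k (ExteriorAlgebra k V)) :
    Module.End k (ExteriorAlgebra k V) :=
  ∑ n ∈ Finset.range (Module.finrank k V + 1),
    if ¬ Even n then iEmb k V n (TrGen k V n φ) else 0

-- parity submodules
noncomputable def evenSub : Submodule k (ExteriorAlgebra k V) :=
  ⨆ n : ℕ, ⋀[k]^(2 * n) V

noncomputable def oddSub : Submodule k (ExteriorAlgebra k V) :=
  ⨆ n : ℕ, ⋀[k]^(2 * n + 1) V

def IsEvenMap (f : Module.End k (ExteriorAlgebra k V)) : Prop :=
  (∀ x ∈ evenSub k V, f x ∈ evenSub k V) ∧ (∀ x ∈ oddSub k V, f x ∈ oddSub k V)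

def IsOddMap (f : Module.End k (ExteriorAlgebra k V)) : Prop :=
  (∀ x ∈ evenSub k V, f x ∈ oddSub k V) ∧ (∀ x ∈ oddSub k V, f x ∈ evenSub k V)

def IsEvenDeriv (δ : Module.End k (ExteriorAlgebra k V)) : Prop :=
  IsEvenMap k V δ ∧ ∀ x y : ExteriorAlgebra k V, δ (x * y) = δ x * y + x * δ y

def IsOddDeriv (δ : Module.End k (ExteriorAlgebra k V)) : Prop :=
  IsOddMap k V δ ∧
  (∀ x ∈ evenSub k V, ∀ y : ExteriorAlgebra k V, δ (x * y) = δ x * y + x * δ y) ∧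
  (∀ x ∈ oddSub k V, ∀ y : ExteriorAlgebra k V, δ (x * y) = δ x * y - x * δ y)

-- supercommutator of parity-decomposed endomorphisms, [a₀+a₁, b₀+b₁]ₛ
def sComm (a₀ a₁ b₀ b₁ : Module.End k (ExteriorAlgebra k V)) :
    Module.End k (ExteriorAlgebra k V) :=
  (a₀ * b₀ - b₀ * a₀) + (a₀ * b₁ - b₁ * a₀) + (a₁ * b₀ - b₀ * a₁) + (a₁ * b₁ + b₁ * a₁)

def IsHomogeneousOfDegree (d : ℤ) (φ : Module.End k (ExteriorAlgebra k V)) : Prop :=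
  ∀ m : ℕ, ∀ x ∈ ⋀[k]^m V,
    (∀ m' : ℕ, (m' : ℤ) = (m : ℤ) + d → φ x ∈ ⋀[k]^m' V) ∧ ((m : ℤ) + d < 0 → φ x = 0)

set_option synthInstance.maxHeartbeats 800000
set_option maxHeartbeats 1000000
-- ===== auxiliary lemmas =====

/-- sign helper -/
noncomputable def sgk (a : ℤ) : k := ((a.negOnePow : ℤ) : k)

lemma sgk_add (a b : ℤ) : sgk k (a + b) = sgk k a * sgk k b := by
  simp [sgk, Int.negOnePow_add]

lemma sgk_congr {a b : ℤ} (h : Even (a - b)) : sgk k a = sgk k b := by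
  unfold sgk
  rw [(Int.negOnePow_eq_iff a b).mpr h]

lemma sgk_natCast (m : ℕ) : sgk k (m : ℤ) = (-1 : k) ^ m := by
  rw [sgk, Int.cast_negOnePow_natCast k m]

lemma eps_ι (v : V) : eps k V (ExteriorAlgebra.ι k v) = - ExteriorAlgebra.ι k v := by
  rw [eps, ExteriorAlgebra.lift_ι_apply]
  simp

lemma eps_mem (m : ℕ) (x : ExteriorAlgebra k V) (hx : x ∈ ⋀[k]^m V) :
    eps k V x = (-1 : k) ^ m • x := by
  rw [exteriorPower] at hx
  induction hx using Submodule.pow_induction_on_left' with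
  | algebraMap r => simp
  | add x y i hx hy ihx ihy => rw [map_add, ihx, ihy, smul_add]
  | mem_mul a ha i y hy ih =>
      obtain ⟨v, rfl⟩ := ha
      rw [map_mul, ih, eps_ι, pow_succ]
      rw [neg_mul, mul_smul_comm, mul_smul, neg_one_smul, smul_neg]

/-- extensionality on graded components -/
lemma end_ext (f g : Module.End k (ExteriorAlgebra k V))
    (h : ∀ m : ℕ, ∀ x ∈ ⋀[k]^m V, f x = g x) : f = g := by
  refine LinearMap.ext fun x => ?_
  induction x using DirectSum.Decomposition.inductionOn fun i => ⋀[k]^i V with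
  | zero => simp
  | add a b ha hb => rw [map_add, map_add, ha, hb]
  | homogeneous hm =>
      obtain ⟨y, hy⟩ := hm
      exact h _ y hy

lemma eps_comm_of_homog (d : ℤ) (f : Module.End k (ExteriorAlgebra k V))
    (hf : IsHomogeneousOfDegree k V d f) :
    (eps k V).toLinearMap ∘ₗ f = sgk k d • (f ∘ₗ (eps k V).toLinearMap) := by
  apply end_ext
  intro m x hx
  simp only [LinearMap.comp_apply, LinearMap.smul_apply, AlgHom.toLinearMap_apply]
  rw [eps_mem k V m x hx, map_smul]
  by_cases hd : 0 ≤ (m : ℤ) + d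
  · have hfx := (hf m x hx).1 ((m : ℤ) + d).toNat (Int.toNat_of_nonneg hd)
    rw [eps_mem k V _ _ hfx, smul_smul, ← sgk_natCast, ← sgk_natCast, ← sgk_add,
      Int.toNat_of_nonneg hd]
    congr 1
    apply sgk_congr
    simp [add_comm]
  · rw [(hf m x hx).2 (by omega)]
    simp

lemma pr_eq_of_mem {m : ℕ} {x : ExteriorAlgebra k V} (hx : x ∈ ⋀[k]^m V) :
    pr k V m x = ⟨x, hx⟩ := by
  apply Subtype.ext
  simpa [pr, ← DirectSum.apply_eq_component, DirectSum.decomposeLinearEquiv_apply] using DirectSum.decompose_of_mem_same (fun i => ⋀[k]^i V) hx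

lemma pr_eq_zero_of_mem {m p : ℕ} {x : ExteriorAlgebra k V} (hx : x ∈ ⋀[k]^m V)
    (h : m ≠ p) : pr k V p x = 0 := by
  apply Subtype.ext
  simpa [pr, ← DirectSum.apply_eq_component, DirectSum.decomposeLinearEquiv_apply] using DirectSum.decompose_of_mem_ne (fun i => ⋀[k]^i V) hx h


lemma mem_evenSub_of_even {m : ℕ} (hm : Even m) {x : ExteriorAlgebra k V}
    (hx : x ∈ ⋀[k]^m V) : x ∈ evenSub k V := by
  obtain ⟨t, ht⟩ := hm
  refine le_iSup (fun i : ℕ => (⋀[k]^(2*i) V : Submodule k (ExteriorAlgebra k V))) t ?_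
  show x ∈ ⋀[k]^(2*t) V
  have h2 : 2 * t = m := by omega
  rw [h2]; exact hx

lemma mem_oddSub_of_odd {m : ℕ} (hm : Odd m) {x : ExteriorAlgebra k V}
    (hx : x ∈ ⋀[k]^m V) : x ∈ oddSub k V := by
  obtain ⟨t, ht⟩ := hm
  refine le_iSup (fun i : ℕ => (⋀[k]^(2*i+1) V : Submodule k (ExteriorAlgebra k V))) t ?_
  show x ∈ ⋀[k]^(2*t+1) V
  have h2 : 2 * t + 1 = m := ht.symm
  rw [h2]; exact hx

lemma one_mem_evenSub : (1 : ExteriorAlgebra k V) ∈ evenSub k V := by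
  refine mem_evenSub_of_even k V (⟨0, rfl⟩ : Even 0) (m := 0) ?_
  show (1 : ExteriorAlgebra k V) ∈ (LinearMap.range (ι k) : Submodule k (ExteriorAlgebra k V)) ^ 0
  rw [pow_zero]
  exact Submodule.one_le.mp le_rfl

lemma sderiv_one (j : ℤ) (δ : Module.End k (ExteriorAlgebra k V))
    (hδe : Even j → IsEvenDeriv k V δ) (hδo : Odd j → IsOddDeriv k V δ) : δ 1 = 0 := by
  rcases Int.even_or_odd j with hj | hj
  · have h := (hδe hj).2 1 1
    simp only [one_mul, mul_one] at h
    exact add_eq_right.mp h.symm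
  · have h := (hδo hj).2.1 1 (one_mem_evenSub k V) 1
    simp only [one_mul, mul_one] at h
    exact add_eq_right.mp h.symm

lemma deriv_mulLeft (j : ℤ) (δ : Module.End k (ExteriorAlgebra k V))
    (hδe : Even j → IsEvenDeriv k V δ) (hδo : Odd j → IsOddDeriv k V δ)
    (m : ℕ) (x : ExteriorAlgebra k V) (hx : x ∈ ⋀[k]^m V) :
    LinearMap.mulLeft k (δ x) =
      δ ∘ₗ LinearMap.mulLeft k x - sgk k (j * m) • (LinearMap.mulLeft k x ∘ₗ δ) := by
  refine LinearMap.ext fun y => ?_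
  simp only [LinearMap.sub_apply, LinearMap.smul_apply, LinearMap.comp_apply,
    LinearMap.mulLeft_apply]
  rcases Int.even_or_odd j with hj | hj
  · have h := (hδe hj).2 x y
    have hs : sgk k (j * m) = 1 := by
      unfold sgk; rw [Int.negOnePow_even _ (hj.mul_right _)]; simp
    rw [hs, one_smul, h, add_sub_cancel_right]
  · rcases Nat.even_or_odd m with hm | hm
    · have h := (hδo hj).2.1 x (mem_evenSub_of_even k V hm hx) y
      have hs : sgk k (j * m) = 1 := by
        unfold sgk
        rw [Int.negOnePow_even _ (Even.mul_left ((Int.even_coe_nat m).mpr hm) j)]; simp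
      rw [hs, one_smul, h, add_sub_cancel_right]
    · have h := (hδo hj).2.2 x (mem_oddSub_of_odd k V hm hx) y
      have hs : sgk k (j * m) = -1 := by
        unfold sgk
        rw [Int.negOnePow_odd _ (hj.mul (Int.odd_coe_nat m |>.mpr hm))]; simp
      rw [hs, neg_one_smul, h, sub_neg_eq_add, sub_add_cancel]

/-- If `φ` is homogeneous of degree `−n` (`n ≥ 0`) and `δ` is a homogeneous
superderivation of degree `j` with `−n + j ≤ 0`, then `Tr_Λ([δ,φ]ₛ) = [δ, Tr_Λ(φ)]ₛ`;
precisely, `i (Tr_Λ ([δ,φ]ₛ)) = [δ, i (Tr_Λ φ)]ₛ` as `k`-linear endomorphisms of `⋀ V`. -/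
theorem generalized_supertrace_of_supercommutator_homogeneous
    [Module.Free k V] [Module.Finite k V] (r : ℕ) (hr : Module.finrank k V = r)
    (n : ℕ) (j : ℤ) (hjn : -(n : ℤ) + j ≤ 0)
    (φ δ : Module.End k (ExteriorAlgebra k V))
    (hφ : IsHomogeneousOfDegree k V (-(n : ℤ)) φ)
    (hδdeg : IsHomogeneousOfDegree k V j δ)
    (hδe : Even j → IsEvenDeriv k V δ) (hδo : Odd j → IsOddDeriv k V δ) :
    iEmb k V ((n : ℤ) - j).toNat
        (TrHom k V ((n : ℤ) - j).toNat
          (δ ∘ₗ φ - ((j * (n : ℤ)).negOnePow : ℤ) • (φ ∘ₗ δ))) =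
      δ ∘ₗ iEmb k V n (TrHom k V n φ) -
        ((j * (n : ℤ)).negOnePow : ℤ) • (iEmb k V n (TrHom k V n φ) ∘ₗ δ) := by
  have hδ1 : δ 1 = 0 := sderiv_one k V j δ hδe hδo
  have hB : δ ∘ₗ iEmb k V n (TrHom k V n φ) = 0 := by
    refine LinearMap.ext fun x => ?_
    simp only [LinearMap.comp_apply, LinearMap.zero_apply, iEmb]
    rw [Algebra.linearMap_apply, Algebra.algebraMap_eq_smul_one, map_smul, hδ1, smul_zero]
  rw [hB, zero_sub]
  set m' : ℕ := ((n : ℤ) - j).toNat with hm'def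
  have hm' : ((m' : ℕ) : ℤ) = (n : ℤ) - j := Int.toNat_of_nonneg (by omega)
  apply end_ext
  intro m x hx
  simp only [iEmb, LinearMap.comp_apply, LinearMap.neg_apply, LinearMap.smul_apply]
  by_cases hcase : m = m'
  · subst hcase
    have hδx : δ x ∈ ⋀[k]^n V := (hδdeg m' x hx).1 n (by omega)
    rw [pr_eq_of_mem k V hx, pr_eq_of_mem k V hδx]
    rw [← map_zsmul (Algebra.linearMap k (ExteriorAlgebra k V)), ← map_neg]
    congr 1
    -- scalar identity
    set E := (eps k V).toLinearMap with hE
    set A := LinearMap.mulLeft k x with hA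
    have hcomm : E ∘ₗ δ = sgk k j • (δ ∘ₗ E) := eps_comm_of_homog k V j δ hδdeg
    have hcyc : ∀ G : Module.End k (ExteriorAlgebra k V),
        LinearMap.trace k _ (E ∘ₗ (δ ∘ₗ G)) =
          sgk k j * LinearMap.trace k _ (E ∘ₗ (G ∘ₗ δ)) := by
      intro G
      have h1 : E ∘ₗ (δ ∘ₗ G) = sgk k j • ((δ ∘ₗ E) ∘ₗ G) := by
        rw [← LinearMap.comp_assoc, hcomm, LinearMap.smul_comp]
      rw [h1, map_smul, smul_eq_mul]
      congr 1
      rw [LinearMap.comp_assoc, ← Module.End.mul_eq_comp δ, LinearMap.trace_mul_comm,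
        Module.End.mul_eq_comp, LinearMap.comp_assoc]
    set c : ℤ := ((j * (n : ℤ)).negOnePow : ℤ) with hc
    set T1 := LinearMap.trace k _ (E ∘ₗ (A ∘ₗ (δ ∘ₗ φ))) with hT1
    set T2 := LinearMap.trace k _ (E ∘ₗ (A ∘ₗ (φ ∘ₗ δ))) with hT2
    have hSval : TrHom k V m' (δ ∘ₗ φ - c • (φ ∘ₗ δ)) ⟨x, hx⟩ =
        (-1 : k) ^ m' * (T1 - c • T2) := by
      show (-1 : k) ^ m' * strs k V (LinearMap.mulLeft k x ∘ₗ (δ ∘ₗ φ - c • (φ ∘ₗ δ))) = _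
      congr 1
      have e1 : LinearMap.mulLeft k x ∘ₗ (δ ∘ₗ φ - c • (φ ∘ₗ δ)) =
          (A ∘ₗ (δ ∘ₗ φ)) - c • (A ∘ₗ (φ ∘ₗ δ)) := by
        refine LinearMap.ext fun y => ?_
        simp only [A, LinearMap.sub_apply, LinearMap.smul_apply, LinearMap.comp_apply,
          LinearMap.mulLeft_apply, mul_sub, mul_smul_comm]
      rw [e1]
      unfold strs
      have e2 : (eps k V).toLinearMap ∘ₗ ((A ∘ₗ (δ ∘ₗ φ)) - c • (A ∘ₗ (φ ∘ₗ δ))) =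
          (E ∘ₗ (A ∘ₗ (δ ∘ₗ φ))) - c • (E ∘ₗ (A ∘ₗ (φ ∘ₗ δ))) := by
        refine LinearMap.ext fun y => ?_
        simp [E]
      rw [e2, map_sub, map_zsmul]
    have hmulL : LinearMap.mulLeft k (δ x) = δ ∘ₗ A - sgk k (j * (m' : ℤ)) • (A ∘ₗ δ) := by
      rw [hA]; exact deriv_mulLeft k V j δ hδe hδo m' x hx
    have hTval : TrHom k V n φ ⟨δ x, hδx⟩ =
        (-1 : k) ^ n * (sgk k j * T2 - sgk k (j * (m' : ℤ)) * T1) := by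
      show (-1 : k) ^ n * strs k V (LinearMap.mulLeft k (δ x) ∘ₗ φ) = _
      congr 1
      have e3 : LinearMap.mulLeft k (δ x) ∘ₗ φ =
          (δ ∘ₗ (A ∘ₗ φ)) - sgk k (j * (m' : ℤ)) • (A ∘ₗ (δ ∘ₗ φ)) := by
        rw [hmulL, LinearMap.sub_comp, LinearMap.smul_comp, LinearMap.comp_assoc,
          LinearMap.comp_assoc]
      rw [e3]
      unfold strs
      have e4 : (eps k V).toLinearMap ∘ₗ ((δ ∘ₗ (A ∘ₗ φ)) - sgk k (j * (m' : ℤ)) • (A ∘ₗ (δ ∘ₗ φ))) =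
          (E ∘ₗ (δ ∘ₗ (A ∘ₗ φ))) - sgk k (j * (m' : ℤ)) • (E ∘ₗ (A ∘ₗ (δ ∘ₗ φ))) := by
        refine LinearMap.ext fun y => ?_
        simp [E]
      rw [e4, map_sub, map_smul, hcyc (A ∘ₗ φ), LinearMap.comp_assoc]
      rw [smul_eq_mul]
    rw [hSval, hTval]
    -- now pure sign arithmetic
    rw [zsmul_eq_mul, zsmul_eq_mul]
    have hck : ((c : ℤ) : k) = sgk k (j * (n : ℤ)) := rfl
    rw [hck, ← sgk_natCast, ← sgk_natCast, hm']
    have hc1 : sgk k ((n : ℤ) - j) = sgk k (j * n) * (sgk k (n : ℤ) * sgk k (j * ((n : ℤ) - j))) := by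
      rw [← sgk_add, ← sgk_add]
      apply sgk_congr
      have he : ((n : ℤ) - j) - (j * n + ((n : ℤ) + j * ((n : ℤ) - j))) = j * (j - 1) - 2 * (j * n) := by
        ring
      rw [he]
      exact (Int.even_mul_pred_self j).sub (even_two_mul _)
    have hc2 : sgk k ((n : ℤ) - j) * sgk k (j * n) = sgk k (j * n) * (sgk k (n : ℤ) * sgk k j) := by
      rw [← sgk_add, ← sgk_add, ← sgk_add]
      apply sgk_congr
      exact ⟨-j, by ring⟩
    linear_combination T1 * hc1 - T2 * hc2
  · -- off-degree components: both sides vanish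
    rw [pr_eq_zero_of_mem k V hx hcase, map_zero, map_zero]
    have hδx0 : pr k V n (δ x) = 0 := by
      by_cases hneg : (m : ℤ) + j < 0
      · rw [(hδdeg m x hx).2 hneg, map_zero]
      · have hp : ((((m : ℤ) + j).toNat : ℕ) : ℤ) = (m : ℤ) + j :=
          Int.toNat_of_nonneg (by omega)
        have hδx : δ x ∈ ⋀[k]^(((m : ℤ) + j).toNat) V := (hδdeg m x hx).1 _ hp
        exact pr_eq_zero_of_mem k V hδx (by omega)
    rw [hδx0, map_zero, map_zero, smul_zero, neg_zero]
end

section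
/- Let k be a commutative ring and V a free k-module of finite rank r. Then Tr_Λ ∘ i is the identity on ⋀V^∨; that is, for every n with 0 ≤ n ≤ r and every ω ∈ ⋀^nV^∨, the generalized supertrace of the endomorphism i(ω) of ⋀V equals ω. -/
open ExteriorAlgebra

variable (k : Type*) [CommRing k] (V : Type*) [AddCommGroup V] [Module k V]

section ExtBasis

variable {k V}
variable {r : ℕ} (b : Module.Basis (Fin r) k V)

/-- The wedge product of basis vectors indexed by a finite set, in increasing order. -/
noncomputable def wB (S : Finset (Fin r)) : ExteriorAlgebra k V :=
  ((S.sort (· ≤ ·)).map fun i => ExteriorAlgebra.ι k (b i)).prod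

lemma wB_empty : wB b (∅ : Finset (Fin r)) = 1 := by
  simp [wB]

lemma wB_singleton (i : Fin r) : wB b {i} = ExteriorAlgebra.ι k (b i) := by
  simp [wB]

lemma wB_insert {a : Fin r} {S : Finset (Fin r)} (h₁ : ∀ x ∈ S, a ≤ x) (h₂ : a ∉ S) :
    wB b (insert a S) = ExteriorAlgebra.ι k (b a) * wB b S := by
  rw [wB, Finset.sort_insert _ h₁ h₂]
  simp [wB]

lemma wB_min_decomp {S : Finset (Fin r)} (hS : S.Nonempty) :
    wB b S = ExteriorAlgebra.ι k (b (S.min' hS)) * wB b (S.erase (S.min' hS)) := by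
  conv_lhs => rw [← Finset.insert_erase (S.min'_mem hS)]
  exact wB_insert b (fun x hx => S.min'_le x (Finset.mem_of_mem_erase hx))
    (Finset.notMem_erase _ _)

lemma step (i : Fin r)
    (Hsmall : ∀ j : Fin r, j < i → ∀ x ∈ Submodule.span k (Set.range (wB b)),
      ExteriorAlgebra.ι k (b j) * x ∈ Submodule.span k (Set.range (wB b))) :
    ∀ (M : ℕ) (S : Finset (Fin r)), S.card ≤ M →
      ExteriorAlgebra.ι k (b i) * wB b S ∈ Submodule.span k (Set.range (wB b)) := by
  intro M
  induction M with
  | zero =>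
    intro S hS
    have : S = ∅ := Finset.card_eq_zero.mp (Nat.le_zero.mp hS)
    subst this
    rw [wB_empty, mul_one, ← wB_singleton b i]
    exact Submodule.subset_span ⟨{i}, rfl⟩
  | succ M ih =>
    intro S hS
    rcases S.eq_empty_or_nonempty with rfl | hne
    · rw [wB_empty, mul_one, ← wB_singleton b i]
      exact Submodule.subset_span ⟨{i}, rfl⟩
    · set j := S.min' hne with hj
      rcases lt_trichotomy i j with hij | hij | hij
      · have hiS : i ∉ S := fun hmem => absurd (S.min'_le i hmem) (not_le.mpr hij)
        rw [← wB_insert b (fun x hx => (hij.trans_le (S.min'_le x hx)).le) hiS]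
        exact Submodule.subset_span ⟨_, rfl⟩
      · rw [wB_min_decomp b hne, ← hj, ← hij, ← mul_assoc, ι_sq_zero, zero_mul]
        exact Submodule.zero_mem _
      · rw [wB_min_decomp b hne, ← hj]
        have hcard : (S.erase j).card ≤ M := by
          have h1 := Finset.card_erase_of_mem (show j ∈ S from S.min'_mem hne)
          have h0 := Finset.card_pos.mpr hne
          omega
        have h1 := ih (S.erase j) hcard
        have hswap : ExteriorAlgebra.ι k (b i) *
            (ExteriorAlgebra.ι k (b j) * wB b (S.erase j)) =
            -(ExteriorAlgebra.ι k (b j) *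
              (ExteriorAlgebra.ι k (b i) * wB b (S.erase j))) := by
          rw [← mul_assoc, ← mul_assoc, ← neg_mul,
            eq_neg_of_add_eq_zero_left (ι_add_mul_swap (b i) (b j))]
        rw [hswap]
        exact Submodule.neg_mem _ (Hsmall j hij _ h1)

lemma mul_wB_mem : ∀ (i : Fin r) (S : Finset (Fin r)),
    ExteriorAlgebra.ι k (b i) * wB b S ∈ Submodule.span k (Set.range (wB b)) := by
  suffices H : ∀ (N : ℕ) (i : Fin r), i.1 ≤ N → ∀ S : Finset (Fin r),
      ExteriorAlgebra.ι k (b i) * wB b S ∈ Submodule.span k (Set.range (wB b)) by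
    exact fun i S => H i.1 i le_rfl S
  intro N
  induction N with
  | zero =>
    intro i hi S
    exact step b i (fun j hj => absurd (Fin.lt_def.mp hj) (by omega)) S.card S le_rfl
  | succ N ih =>
    intro i hi S
    refine step b i (fun j hj x hx => ?_) S.card S le_rfl
    have hj' : j.1 ≤ N := by
      have := Fin.lt_def.mp hj
      omega
    refine Submodule.span_induction (fun y hy => ?_) (by simp) (fun y z _ _ hy hz => ?_)
      (fun c y _ hy => ?_) hx
    · obtain ⟨T, rfl⟩ := hy
      exact ih j hj' T
    · rw [mul_add]; exact Submodule.add_mem _ hy hz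
    · rw [mul_smul_comm]; exact Submodule.smul_mem _ _ hy

lemma mul_span_mem (v : V) (x : ExteriorAlgebra k V)
    (hx : x ∈ Submodule.span k (Set.range (wB b))) :
    ExteriorAlgebra.ι k v * x ∈ Submodule.span k (Set.range (wB b)) := by
  have hv : v = ∑ i, b.repr v i • b i := (b.sum_repr v).symm
  rw [hv, map_sum]
  rw [Finset.sum_mul]
  refine Submodule.sum_mem _ fun i _ => ?_
  rw [map_smul, smul_mul_assoc]
  refine Submodule.smul_mem _ _ ?_
  refine Submodule.span_induction (fun y hy => ?_) (by simp) (fun y z _ _ hy hz => ?_)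
    (fun c y _ hy => ?_) hx
  · obtain ⟨T, rfl⟩ := hy
    exact mul_wB_mem b i T
  · rw [mul_add]; exact Submodule.add_mem _ hy hz
  · rw [mul_smul_comm]; exact Submodule.smul_mem _ _ hy

lemma span_wB_eq_top : Submodule.span k (Set.range (wB b)) = ⊤ := by
  rw [eq_top_iff]
  have htop : (⊤ : Submodule k (ExteriorAlgebra k V)) =
      ⨆ n : ℕ, ⋀[k]^n V :=
    ((DirectSum.Decomposition.isInternal
      (fun n : ℕ => (⋀[k]^n V : Submodule k (ExteriorAlgebra k V)))).submodule_iSup_eq_top).symm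
  rw [htop]
  refine iSup_le fun n x hx => ?_
  refine Submodule.pow_induction_on_left' (M := LinearMap.range (ExteriorAlgebra.ι k (M := V)))
    (C := fun _ y _ => y ∈ Submodule.span k (Set.range (wB b))) (fun c => ?_)
    (fun y z i hy hz hy' hz' => Submodule.add_mem _ hy' hz') (fun m hm i y hy hy' => ?_) hx
  · show (algebraMap k (ExteriorAlgebra k V)) c ∈ Submodule.span k (Set.range (wB b))
    rw [Algebra.algebraMap_eq_smul_one, ← wB_empty b]
    exact Submodule.smul_mem _ _ (Submodule.subset_span ⟨∅, rfl⟩)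
  · obtain ⟨v, rfl⟩ := hm
    exact mul_span_mem b v y hy'

lemma wB_eq_ιMulti (T : Finset (Fin r)) :
    wB b T = ιMulti k T.card (fun p => b (T.orderEmbOfFin rfl p)) := by
  rw [ιMulti_apply, wB]
  congr 1
  refine (List.ext_getElem (by simp) fun i h1 h2 => ?_).symm
  simp [Finset.orderEmbOfFin_apply]

noncomputable def lamB (S : Finset (Fin r)) : ExteriorAlgebra k V →ₗ[k] k :=
  liftAlternating (R := k) (M := V) (N := k)
    (fun m => if hm : m = S.card then
        (Matrix.detRowAlternating).compLinearMap
          (LinearMap.pi fun q : Fin m => b.coord (S.orderEmbOfFin hm.symm q))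
      else 0)

lemma lamB_wB (S T : Finset (Fin r)) : lamB b S (wB b T) = if S = T then 1 else 0 := by
  rw [wB_eq_ιMulti, lamB, liftAlternating_apply_ιMulti]
  by_cases hm : T.card = S.card
  · rw [dif_pos hm]
    by_cases hST : S = T
    · subst hST
      rw [if_pos rfl]
      have hM : (Matrix.of fun p q : Fin S.card =>
          b.coord (S.orderEmbOfFin hm.symm q) (b (S.orderEmbOfFin rfl p))) = 1 := by
        ext p q
        simp only [Matrix.of_apply, Module.Basis.coord_apply, Module.Basis.repr_self, Finsupp.single_apply,
          Matrix.one_apply]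
        have hiff : S.orderEmbOfFin rfl p = S.orderEmbOfFin hm.symm q ↔ p = q := by
          constructor
          · intro h
            exact (S.orderEmbOfFin rfl).injective h
          · rintro rfl; rfl
        simp [hiff]
      show Matrix.det (Matrix.of fun p q : Fin S.card =>
          b.coord (S.orderEmbOfFin hm.symm q) (b (S.orderEmbOfFin rfl p))) = 1
      rw [hM, Matrix.det_one]
    · rw [if_neg hST]
      obtain ⟨x, hxT, hxS⟩ : ∃ x ∈ T, x ∉ S := by
        by_contra h
        push_neg at h
        exact hST ((Finset.eq_of_subset_of_card_le h hm.ge).symm)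
      obtain ⟨p₀, hp₀⟩ : ∃ p₀, T.orderEmbOfFin rfl p₀ = x := by
        have hx' : x ∈ Set.range (T.orderEmbOfFin rfl) := by
          rw [Finset.range_orderEmbOfFin]
          exact Finset.mem_coe.mpr hxT
        exact hx'
      show Matrix.det (Matrix.of fun p q : Fin T.card =>
          b.coord (S.orderEmbOfFin hm.symm q) (b (T.orderEmbOfFin rfl p))) = 0
      apply Matrix.det_eq_zero_of_row_eq_zero p₀
      intro q
      simp only [Matrix.of_apply, Module.Basis.coord_apply, Module.Basis.repr_self, Finsupp.single_apply]
      rw [if_neg]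
      intro h
      rw [hp₀] at h
      exact hxS (h ▸ Finset.orderEmbOfFin_mem S hm.symm q)
  · rw [dif_neg hm, if_neg (fun h => hm (by rw [h]))]
    rfl

lemma linIndep_wB : LinearIndependent k (wB b) := by
  rw [linearIndependent_iff]
  intro l hl
  ext T
  have h2 : lamB b T (Finsupp.linearCombination k (wB b) l) = l T := by
    rw [Finsupp.linearCombination_apply, map_finsuppSum]
    simp only [map_smul, lamB_wB, smul_eq_mul, mul_ite, mul_one, mul_zero]
    rw [Finsupp.sum, Finset.sum_ite_eq]
    split
    · rfl
    · next h => rw [Finsupp.notMem_support_iff.mp h]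
  rw [hl, map_zero] at h2
  simp [h2.symm]


noncomputable def basisExt : Module.Basis (Finset (Fin r)) k (ExteriorAlgebra k V) :=
  Module.Basis.mk (linIndep_wB b) (span_wB_eq_top b).ge

end ExtBasis

section MainAux

variable {k V}

lemma eps_apply_exteriorPower {n : ℕ} {x : ExteriorAlgebra k V} (hx : x ∈ ⋀[k]^n V) :
    eps k V x = ((-1 : k) ^ n) • x := by
  refine Submodule.pow_induction_on_left'
    (M := LinearMap.range (ExteriorAlgebra.ι k (M := V)))
    (C := fun i y _ => eps k V y = ((-1 : k) ^ i) • y) (fun c => ?_)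
    (fun y z i hy hz hy' hz' => ?_) (fun m hm i y hy hy' => ?_) hx
  · simp [AlgHom.commutes]
  · simp only [map_add, hy', hz', smul_add]
  · obtain ⟨v, rfl⟩ := hm
    have hιv : eps k V (ExteriorAlgebra.ι k v) = -(ExteriorAlgebra.ι k v) := by
      simp [eps, ExteriorAlgebra.lift_ι_apply]
    rw [map_mul, hιv, hy']
    rw [neg_mul, mul_smul_comm]
    rw [pow_succ, mul_neg_one, neg_smul]

lemma pr_coe {n : ℕ} (η : ⋀[k]^n V) : pr k V n (η : ExteriorAlgebra k V) = η := by
  simp only [pr, LinearMap.coe_comp, Function.comp_apply, LinearEquiv.coe_coe,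
    DirectSum.decomposeLinearEquiv_apply, DirectSum.decompose_coe]
  exact DirectSum.of_eq_same
    (β := fun i => (⋀[k]^i V : Submodule k (ExteriorAlgebra k V))) n η

lemma trace_end_self (f : k →ₗ[k] k) : LinearMap.trace k k f = f 1 := by
  rw [LinearMap.trace_eq_matrix_trace k (Module.Basis.singleton Unit k)]
  simp [Matrix.trace, LinearMap.toMatrix_apply]

end MainAux

/-- `Tr_Λ ∘ i` is the identity on `⋀ V^∨`: for every `0 ≤ n ≤ r` and every
`ω ∈ ⋀ⁿ V^∨`, the generalized supertrace of the endomorphism `i(ω)` of `⋀ V` equals `ω`. -/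
theorem generalized_supertrace_comp_iEmb
    [Module.Free k V] [Module.Finite k V] (r : ℕ) (hr : Module.finrank k V = r)
    (n : ℕ) (hn : n ≤ r) (ω : Module.Dual k (⋀[k]^n V)) :
    TrHom k V n (iEmb k V n ω) = ω := by
  classical
  let bV := (Module.Free.chooseBasis k V).reindex
    (Fintype.equivFin (Module.Free.ChooseBasisIndex k V))
  let bE := basisExt bV
  haveI : Module.Free k (ExteriorAlgebra k V) := Module.Free.of_basis bE
  haveI : Module.Finite k (ExteriorAlgebra k V) := Module.Finite.of_basis bE
  apply LinearMap.ext
  intro η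
  show (-1 : k) ^ n *
      strs k V (LinearMap.mulLeft k (η : ExteriorAlgebra k V) ∘ₗ iEmb k V n ω) = ω η
  have hcomp : (eps k V).toLinearMap ∘ₗ
      (LinearMap.mulLeft k (η : ExteriorAlgebra k V) ∘ₗ iEmb k V n ω) =
      (LinearMap.toSpanSingleton k (ExteriorAlgebra k V)
        (eps k V (η : ExteriorAlgebra k V))) ∘ₗ ((ω : Module.Dual k (⋀[k]^n V)) ∘ₗ pr k V n) := by
    apply LinearMap.ext
    intro x
    simp only [LinearMap.coe_comp, Function.comp_apply, AlgHom.toLinearMap_apply,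
      LinearMap.mulLeft_apply, iEmb, Algebra.linearMap_apply,
      LinearMap.toSpanSingleton_apply]
    rw [← Algebra.commutes (ω (pr k V n x)) (η : ExteriorAlgebra k V),
      ← Algebra.smul_def, map_smul]
  have htr : strs k V (LinearMap.mulLeft k (η : ExteriorAlgebra k V) ∘ₗ iEmb k V n ω) =
      ω (pr k V n (eps k V (η : ExteriorAlgebra k V))) := by
    rw [strs, hcomp, LinearMap.trace_comp_comm', trace_end_self]
    simp
  rw [htr, eps_apply_exteriorPower η.2, map_smul, map_smul, pr_coe, smul_eq_mul,
    ← mul_assoc, ← pow_add, Even.neg_one_pow ⟨n, rfl⟩, one_mul]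
end
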